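/- Let w ∈ ℝⁿ and let β₁, …, βᵢ ∈ ℝⁿ be linearly independent. Let ε = w − P w, where P is the orthogonal projection of ℝⁿ onto span{β₁, …, βᵢ}. If ε ≠ 0, then the extended family β₁, …, βᵢ, sign(ε) is linearly independent. -/

import Mathlib

open scoped RealInnerProductSpace


/-- The coordinatewise sign vector: `signVec ε j = 1` if `ε j ≥ 0`, and `-1` otherwise. -/
noncomputable def signVec {n : ℕ} (ε : EuclideanSpace ℝ (Fin n)) : EuclideanSpace ℝ (Fin n) :=
  WithLp.toLp 2 fun j => if 0 ≤ ε j then 1 else -1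

/-- Inductive step of ALQ's sketching: if `β₁, …, βᵢ` are linearly independent and the residual
`ε = w − P w` of the orthogonal projection `P` onto their span is nonzero, then the extended
family `β₁, …, βᵢ, sign(ε)` is linearly independent. -/
theorem alq_sketching_step {n i : ℕ} (w : EuclideanSpace ℝ (Fin n))
    (β : Fin i → EuclideanSpace ℝ (Fin n)) (hβ : LinearIndependent ℝ β)
    (ε : EuclideanSpace ℝ (Fin n))
    (hε : ε = w - (Submodule.orthogonalProjectionOnto (Submodule.span ℝ (Set.range β)) w :
      EuclideanSpace ℝ (Fin n)))
    (hne : ε ≠ 0) :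
    LinearIndependent ℝ (Fin.snoc β (signVec ε) : Fin (i + 1) → EuclideanSpace ℝ (Fin n)) := by
  rw [linearIndependent_fin_snoc]
  refine ⟨hβ, fun hmem => ?_⟩
  have hεorth : ε ∈ (Submodule.span ℝ (Set.range β))ᗮ := by
    rw [hε]; exact Submodule.sub_starProjection_mem_orthogonal w
  have h0 : (inner ℝ ε (signVec ε) : ℝ) = 0 :=
    (Submodule.mem_orthogonal' _ _).mp hεorth _ hmem
  have hsum : (inner ℝ ε (signVec ε) : ℝ) = ∑ j, |ε j| := by
    rw [PiLp.inner_apply]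
    refine Finset.sum_congr rfl fun j _ => ?_
    simp only [signVec, PiLp.toLp_apply, RCLike.inner_apply, conj_trivial]
    split_ifs with h
    · rw [one_mul, abs_of_nonneg h]
    · rw [neg_one_mul, abs_of_neg (lt_of_not_ge h)]
  have hpos : 0 < ∑ j, |ε j| := by
    obtain ⟨j, hj⟩ : ∃ j, ε j ≠ 0 := by
      by_contra h
      push_neg at h
      exact hne (PiLp.ext h)
    exact Finset.sum_pos' (fun k _ => abs_nonneg _)
      ⟨j, Finset.mem_univ j, abs_pos.mpr hj⟩
  rw [h0] at hsum
  exact absurd hsum.symm hpos.ne'
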